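/- Let k be an infinite field, n ≥ 2, G = U_n(k) = 1 + 𝔲_n(k), and Γ = G × G acting on 𝔲_n(k) by (g,h)·a = gah⁻¹. Then the set of elements a ∈ 𝔲_n(k) with finite Γ-orbit is exactly k·e_{1,n}; equivalently, the subgroup G_fsc of elements lying in finite superclasses equals 1 + k·e_{1,n} = Z(U_n(k)). -/

import Mathlib

/-- A matrix is unitriangular: ones on the diagonal, zeroes below it. -/
def IsUnitriangular {k : Type*} [Field k] {n : ℕ}
    (g : Matrix (Fin n) (Fin n) k) : Prop :=
  (∀ i, g i i = 1) ∧ ∀ i j : Fin n, (j : ℕ) < (i : ℕ) → g i j = 0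

open Matrix in
lemma IsUnitriangular.det_eq_one {k : Type*} [Field k] {n : ℕ}
    {g : Matrix (Fin n) (Fin n) k} (hg : IsUnitriangular g) : g.det = 1 := by
  rw [Matrix.det_of_upperTriangular (fun i j hij => hg.2 i j hij)]
  simp [hg.1]

open Matrix in
lemma isUnitriangular_one_add_smul {k : Type*} [Field k] {n : ℕ} (t : k)
    {p q : Fin n} (hpq : (p : ℕ) < (q : ℕ)) :
    IsUnitriangular ((1 : Matrix (Fin n) (Fin n) k) + t • Matrix.single p q 1) := by
  constructor
  · intro i
    have : ¬(p = i ∧ q = i) := by rintro ⟨rfl, rfl⟩; omega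
    simp [Matrix.add_apply, Matrix.one_apply, Matrix.single_apply_of_ne _ _ _ _ _ this]
  · intro i j hij
    have h1 : i ≠ j := by intro h; omega
    have h2 : ¬(p = i ∧ q = j) := by rintro ⟨rfl, rfl⟩; omega
    simp [Matrix.add_apply, Matrix.one_apply_ne h1, Matrix.single_apply_of_ne _ _ _ _ _ h2]

open Matrix in
lemma inv_one_add_smul {k : Type*} [Field k] {n : ℕ} (t : k)
    {p q : Fin n} (hpq : p ≠ q) :
    ((1 : Matrix (Fin n) (Fin n) k) + t • Matrix.single p q 1)⁻¹
      = 1 - t • Matrix.single p q 1 := by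
  apply Matrix.inv_eq_right_inv
  have hXX : (t • Matrix.single p q (1:k)) * (t • Matrix.single p q (1:k)) = 0 := by
    rw [Matrix.smul_mul, Matrix.mul_smul, Matrix.single_mul_single_of_ne 1 p q p hpq.symm 1]
    simp
  rw [add_mul, one_mul, mul_sub, mul_one, hXX, sub_zero, sub_add_cancel]

/-- over an infinite field `k`, a strictly upper triangular
matrix `a` has finite orbit `{g a h⁻¹ : g, h ∈ Uₙ(k)}` if and only if
`a ∈ k·e₁ₙ`; equivalently `G_fsc = 1 + k·e₁ₙ = Z(Uₙ(k))`. -/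
theorem stmt_19 (k : Type*) [Field k] [Infinite k] (n : ℕ) (hn : 2 ≤ n)
    (a : Matrix (Fin n) (Fin n) k)
    (ha : ∀ i j : Fin n, (j : ℕ) ≤ (i : ℕ) → a i j = 0) :
    {x : Matrix (Fin n) (Fin n) k | ∃ g h : Matrix (Fin n) (Fin n) k,
        IsUnitriangular g ∧ IsUnitriangular h ∧ x = g * a * h⁻¹}.Finite ↔
      ∃ α : k, a = α • Matrix.single
        (⟨0, by omega⟩ : Fin n) (⟨n - 1, by omega⟩ : Fin n) (1 : k) := by
  set z : Fin n := ⟨0, by omega⟩ with hz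
  set w : Fin n := ⟨n - 1, by omega⟩ with hw
  have hzv : (z : ℕ) = 0 := rfl
  have hwv : (w : ℕ) = n - 1 := rfl
  set S := {x : Matrix (Fin n) (Fin n) k | ∃ g h : Matrix (Fin n) (Fin n) k,
        IsUnitriangular g ∧ IsUnitriangular h ∧ x = g * a * h⁻¹} with hS
  constructor
  · intro hfin
    by_contra hA
    push_neg at hA
    -- find an entry off (0, n-1) that is nonzero
    have hex : ∃ i j : Fin n, ¬(i = z ∧ j = w) ∧ a i j ≠ 0 := by
      by_contra h
      push_neg at h
      refine hA (a z w) ?_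
      ext i j
      by_cases hij : i = z ∧ j = w
      · obtain ⟨rfl, rfl⟩ := hij
        simp [Matrix.single_apply_same]
      · have hne : ¬(z = i ∧ w = j) := fun hc => hij ⟨hc.1.symm, hc.2.symm⟩
        rw [h i j (fun h1 h2 => hij ⟨h1, h2⟩), Matrix.smul_apply,
          Matrix.single_apply_of_ne _ _ _ _ _ hne, smul_zero]
    obtain ⟨i, j, hij, haij⟩ := hex
    have hij_lt : (i : ℕ) < (j : ℕ) := by
      by_contra h
      exact haij (ha i j (by omega))
    have hcase : (i : ℕ) ≠ 0 ∨ (j : ℕ) < n - 1 := by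
      by_contra h
      push_neg at h
      have hjn := j.2
      exact hij ⟨Fin.ext (by simp [hz, h.1]), Fin.ext (by simp [hw]; omega)⟩
    rcases hcase with hi0 | hjw
    · -- use g_t = 1 + t • E_{i-1, i}
      obtain ⟨i', hi'⟩ : ∃ i' : Fin n, (i' : ℕ) = (i : ℕ) - 1 := ⟨⟨(i : ℕ) - 1, by omega⟩, rfl⟩
      have hii : (i' : ℕ) < (i : ℕ) := by omega
      have hmem : ∀ t : k, (1 + t • Matrix.single i' i 1) * a ∈ S := by
        intro t
        refine ⟨1 + t • Matrix.single i' i 1, 1,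
          isUnitriangular_one_add_smul t hii, ⟨fun p => by simp [Matrix.one_apply],
            fun p q h => Matrix.one_apply_ne (by intro hh; omega)⟩, ?_⟩
        rw [inv_one, Matrix.mul_one]
      have hinj : Function.Injective
          (fun t : k => (1 + t • Matrix.single i' i 1) * a) := by
        intro s t hst
        have := congrFun (congrFun hst i') j
        simp only [Matrix.add_mul, Matrix.one_mul, Matrix.smul_mul,
          Matrix.add_apply, Matrix.smul_apply,
          Matrix.single_mul_apply_same, one_mul] at this
        exact mul_right_cancel₀ haij (add_left_cancel this)
      exact (Set.infinite_of_injective_forall_mem hinj hmem) hfin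
    · -- use h_t = 1 + t • E_{j, j+1}
      obtain ⟨j', hj'⟩ : ∃ j' : Fin n, (j' : ℕ) = (j : ℕ) + 1 := ⟨⟨(j : ℕ) + 1, by omega⟩, rfl⟩
      have hjj : (j : ℕ) < (j' : ℕ) := by omega
      have hjne : j ≠ j' := by intro h; rw [h] at hjj; omega
      have hmem : ∀ t : k, a * (1 - t • Matrix.single j j' 1) ∈ S := by
        intro t
        refine ⟨1, 1 + t • Matrix.single j j' 1,
          ⟨fun p => by simp [Matrix.one_apply],
            fun p q h => Matrix.one_apply_ne (by intro hh; omega)⟩,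
          isUnitriangular_one_add_smul t hjj, ?_⟩
        rw [inv_one_add_smul t hjne, Matrix.one_mul]
      have hinj : Function.Injective
          (fun t : k => a * (1 - t • Matrix.single j j' 1)) := by
        intro s t hst
        have := congrFun (congrFun hst i) j'
        simp only [Matrix.mul_sub, Matrix.mul_one, Matrix.mul_smul,
          Matrix.sub_apply, Matrix.smul_apply,
          Matrix.mul_single_apply_same, mul_one] at this
        exact mul_right_cancel₀ haij (sub_right_injective this)
      exact (Set.infinite_of_injective_forall_mem hinj hmem) hfin
  · rintro ⟨α, rfl⟩
    apply Set.Finite.subset (Set.finite_singleton (α • Matrix.single z w (1:k)))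
    rintro x ⟨g, h, hg, hh, rfl⟩
    have hzw : (z : ℕ) < (w : ℕ) := by omega
    have hgE : g * Matrix.single z w (1:k) = Matrix.single z w (1:k) := by
      ext p q
      by_cases hq : q = w
      · subst hq
        rw [Matrix.mul_single_apply_same, mul_one]
        by_cases hp : p = z
        · subst hp; rw [hg.1, Matrix.single_apply_same]
        · have hpv : (p : ℕ) ≠ (z : ℕ) := fun hval => hp (Fin.ext hval)
          rw [hg.2 p z (by omega),
            Matrix.single_apply_of_ne _ _ _ _ _ (by rintro ⟨rfl, -⟩; exact hp rfl)]
      · rw [Matrix.mul_single_apply_of_ne _ _ _ _ _ hq _,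
          Matrix.single_apply_of_ne _ _ _ _ _ (by rintro ⟨-, rfl⟩; exact hq rfl)]
    have hEh : Matrix.single z w (1:k) * h = Matrix.single z w (1:k) := by
      ext p q
      by_cases hp : p = z
      · subst hp
        rw [Matrix.single_mul_apply_same, one_mul]
        by_cases hq : q = w
        · subst hq; rw [hh.1, Matrix.single_apply_same]
        · have hqv : (q : ℕ) ≠ (w : ℕ) := fun hval => hq (Fin.ext hval)
          have hqn := q.2
          rw [hh.2 w q (by omega),
            Matrix.single_apply_of_ne _ _ _ _ _ (by rintro ⟨-, rfl⟩; exact hq rfl)]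
      · rw [Matrix.single_mul_apply_of_ne _ _ _ _ _ hp _,
          Matrix.single_apply_of_ne _ _ _ _ _ (by rintro ⟨rfl, -⟩; exact hp rfl)]
    have hhdet : IsUnit h.det := by rw [hh.det_eq_one]; exact isUnit_one
    calc g * (α • Matrix.single z w (1:k)) * h⁻¹
        = α • (g * Matrix.single z w (1:k) * h⁻¹) := by
          rw [Matrix.mul_smul, Matrix.smul_mul]
      _ = α • (Matrix.single z w (1:k) * h⁻¹) := by rw [hgE]
      _ = α • (Matrix.single z w (1:k) * h * h⁻¹) := by rw [hEh]
      _ = α • Matrix.single z w (1:k) := by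
          rw [Matrix.mul_assoc, Matrix.mul_nonsing_inv h hhdet, Matrix.mul_one]
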